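/- Let P be an m-homogeneous polynomial (m ≥ 2) on a normed space X with ‖P‖ > 0, let A_P = {x : P^n(x) → 0} and J_P = ∂A_P. If x ∉ J_P, then either ‖P^n(x)‖ → ∞ or P^n(x) → 0. -/

import Mathlib

open Filter

private lemma contract_aux {X : Type*} [NormedAddCommGroup X] [NormedSpace ℂ X]
    (P : X → X) (m : ℕ) (hm : 2 ≤ m) (C : ℝ) (hC : 0 < C)
    (hbound : ∀ x : X, ‖P x‖ ≤ C * ‖x‖ ^ m)
    (y : X) (hy : C * ‖y‖ ^ (m - 1) < 1) :
    Tendsto (fun n => P^[n] y) atTop (nhds 0) := by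
  set q : ℝ := C * ‖y‖ ^ (m - 1) with hq
  have hq0 : 0 ≤ q := mul_nonneg hC.le (pow_nonneg (norm_nonneg _) _)
  have key : ∀ n, ‖P^[n] y‖ ≤ q ^ n * ‖y‖ := by
    intro n
    induction n with
    | zero => simp
    | succ n ih =>
      have hle : ‖P^[n] y‖ ≤ ‖y‖ := by
        calc ‖P^[n] y‖ ≤ q ^ n * ‖y‖ := ih
          _ ≤ 1 * ‖y‖ := by
              gcongr
              exact pow_le_one₀ hq0 hy.le
          _ = ‖y‖ := one_mul _
      rw [Function.iterate_succ_apply']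
      calc ‖P (P^[n] y)‖ ≤ C * ‖P^[n] y‖ ^ m := hbound _
        _ = (C * ‖P^[n] y‖ ^ (m - 1)) * ‖P^[n] y‖ := by
            rw [mul_assoc, ← pow_succ]
            congr 2
            omega
        _ ≤ q * (q ^ n * ‖y‖) := by
            apply mul_le_mul _ ih (norm_nonneg _)
              (mul_nonneg hC.le (pow_nonneg (norm_nonneg _) _))
            gcongr
        _ = q ^ (n + 1) * ‖y‖ := by ring
  rw [tendsto_zero_iff_norm_tendsto_zero]
  have h0 : Tendsto (fun n : ℕ => q ^ n * ‖y‖) atTop (nhds 0) := by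
    have := (tendsto_pow_atTop_nhds_zero_of_lt_one hq0 hy).mul_const ‖y‖
    simpa using this
  exact squeeze_zero (fun n => norm_nonneg _) key h0

private lemma iter_hom {X : Type*} [NormedAddCommGroup X] [NormedSpace ℂ X]
    (P : X → X) (m : ℕ)
    (hhom : ∀ (c : ℂ) (x : X), P (c • x) = c ^ m • P x)
    (c : ℂ) (x : X) : ∀ n, P^[n] (c • x) = c ^ (m ^ n) • P^[n] x := by
  intro n
  induction n with
  | zero => simp
  | succ n ih =>
    rw [Function.iterate_succ_apply', Function.iterate_succ_apply', ih, hhom,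
      ← pow_mul, ← pow_succ]

/-- Let `A_P = {x | P^[n] x → 0}` and `J_P = frontier A_P` (the Julia set).
If `x ∉ J_P` then either `‖P^[n] x‖ → ∞` or `P^[n] x → 0`. -/
theorem not_in_julia_dichotomy {X : Type*} [NormedAddCommGroup X] [NormedSpace ℂ X]
    (P : X → X) (m : ℕ) (hm : 2 ≤ m)
    (hhom : ∀ (c : ℂ) (x : X), P (c • x) = c ^ m • P x)
    (C : ℝ) (hC : 0 < C)
    (hbound : ∀ x : X, ‖P x‖ ≤ C * ‖x‖ ^ m)
    (hsup : ∀ ε > (0 : ℝ), ∃ x : X, ‖x‖ ≤ 1 ∧ C - ε < ‖P x‖)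
    (x : X)
    (hx : x ∉ frontier {y : X | Tendsto (fun n => P^[n] y) atTop (nhds 0)}) :
    Tendsto (fun n => ‖P^[n] x‖) atTop atTop ∨
      Tendsto (fun n => P^[n] x) atTop (nhds 0) := by
  set A := {y : X | Tendsto (fun n => P^[n] y) atTop (nhds 0)} with hA
  by_cases hcl : x ∈ closure A
  · -- then x ∈ interior A ⊆ A
    right
    have hint : x ∈ interior A := by
      by_contra h
      exact hx ⟨hcl, h⟩
    exact interior_subset hint
  · -- x ∉ closure A : show norms → ∞
    left
    by_contra h
    -- get a bound M along a subsequence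
    simp only [tendsto_atTop, not_forall, Filter.not_eventually, not_le] at h
    obtain ⟨M, hM⟩ := h
    set M' : ℝ := max M 1 with hM'
    have hM'pos : (0 : ℝ) < M' := lt_of_lt_of_le one_pos (le_max_right _ _)
    have hM'freq : ∃ᶠ n in atTop, ‖P^[n] x‖ < M' :=
      hM.mono fun n hn => lt_of_lt_of_le hn (le_max_left _ _)
    -- the small radius δ
    set δ : ℝ := min 1 (1 / (2 * C)) with hδ
    have hδpos : 0 < δ := lt_min one_pos (by positivity)
    have hδsmall : ∀ y : X, ‖y‖ < δ → C * ‖y‖ ^ (m - 1) < 1 := by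
      intro y hy
      have h1 : ‖y‖ ^ (m - 1) ≤ ‖y‖ ^ 1 := by
        apply pow_le_pow_of_le_one (norm_nonneg _)
          (le_of_lt (lt_of_lt_of_le hy (min_le_left _ _)))
        omega
      have h2 : ‖y‖ < 1 / (2 * C) := lt_of_lt_of_le hy (min_le_right _ _)
      calc C * ‖y‖ ^ (m - 1) ≤ C * ‖y‖ := by simpa using mul_le_mul_of_nonneg_left h1 hC.le
        _ < C * (1 / (2 * C)) := by gcongr
        _ = 1 / 2 := by field_simp
        _ < 1 := by norm_num
    -- for every t ∈ (0,1), (t : ℂ) • x ∈ A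
    have hkey : ∀ t : ℝ, 0 < t → t < 1 → ((t : ℂ) • x) ∈ A := by
      intro t ht0 ht1
      -- choose N with t ^ N < δ / M'
      obtain ⟨N, hN⟩ := ((tendsto_pow_atTop_nhds_zero_of_lt_one ht0.le ht1).eventually
        (eventually_lt_nhds (show (0:ℝ) < δ / M' by positivity))).exists
      -- frequently get n ≥ N with small orbit norm
      obtain ⟨n, hnN, hn⟩ := (hM'freq.and_eventually (eventually_ge_atTop N)).exists
      have hmn : t ^ (m ^ n) < δ / M' := by
        calc t ^ (m ^ n) ≤ t ^ N := by
              apply pow_le_pow_of_le_one ht0.le ht1.le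
              calc N ≤ n := hn
                _ ≤ m ^ n := Nat.le_of_lt (Nat.lt_pow_self (by omega : 1 < m))
          _ < δ / M' := hN
      set y : X := P^[n] ((t : ℂ) • x) with hy
      have hynorm : ‖y‖ < δ := by
        have : y = (t : ℂ) ^ (m ^ n) • P^[n] x := iter_hom P m hhom _ _ n
        rw [this, norm_smul]
        have hnormc : ‖((t : ℂ)) ^ (m ^ n)‖ = t ^ (m ^ n) := by
          rw [norm_pow, Complex.norm_real, Real.norm_of_nonneg ht0.le]
        rw [hnormc]
        calc t ^ (m ^ n) * ‖P^[n] x‖ ≤ t ^ (m ^ n) * M' :=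
              mul_le_mul_of_nonneg_left hnN.le (pow_nonneg ht0.le _)
          _ < (δ / M') * M' := by
              apply mul_lt_mul_of_pos_right hmn hM'pos
          _ = δ := by field_simp
      have hyA : Tendsto (fun k => P^[k] y) atTop (nhds 0) :=
        contract_aux P m hm C hC hbound y (hδsmall y hynorm)
      -- shift back
      have hshift : ∀ k, P^[k] y = P^[k + n] ((t : ℂ) • x) := by
        intro k
        rw [hy, ← Function.iterate_add_apply]
      simp only [hshift] at hyA
      exact (tendsto_add_atTop_iff_nat n).mp hyA
    -- let t → 1 : x ∈ closure A, contradiction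
    apply hcl
    have htend : Tendsto (fun j : ℕ => (((1 - 1 / (j + 1) : ℝ)) : ℂ) • x) atTop (nhds x) := by
      have h1 : Tendsto (fun j : ℕ => (1 - 1 / (j + 1) : ℝ)) atTop (nhds 1) := by
        have := tendsto_one_div_add_atTop_nhds_zero_nat (𝕜 := ℝ)
        have h2 := (tendsto_const_nhds (x := (1:ℝ)) (f := atTop (α := ℕ))).sub this
        simpa using h2
      have h2 : Tendsto (fun j : ℕ => ((1 - 1 / (j + 1) : ℝ) : ℂ)) atTop (nhds 1) := by
        have := (Complex.continuous_ofReal.tendsto 1).comp h1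
        simpa [Function.comp_def] using this
      have := h2.smul_const x
      simpa using this
    apply mem_closure_of_tendsto htend
    filter_upwards [eventually_ge_atTop 1] with j hj
    apply hkey
    · have : 1 / ((j : ℝ) + 1) < 1 := by
        rw [div_lt_one (by positivity)]
        have : (1 : ℝ) ≤ j := by exact_mod_cast hj
        linarith
      linarith
    · have : 0 < 1 / ((j : ℝ) + 1) := by positivity
      linarith
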